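/- Let n ≥ 1, let G be a real n×n matrix with zero diagonal, let c ∈ ℝⁿ with c_i > 0 for all i, let λ ∈ ℝⁿ with λ_i > 0 for all i, let Λ = diag(λ), and let b_1, …, b_n : ℝ → ℝ be differentiable functions. Define u_k(x) = b_k(x_k + Σ_{j≠k} G_{kj} x_j) − c_k x_k. Suppose I + Λ⁻¹GᵀΛ is invertible and x* ∈ ℝⁿ with all entries strictly positive maximizes Σ_k λ_k u_k(x) over {x ⪰ 0}. Then the vector v ∈ ℝⁿ with entries v_i = b_i'(((I+G)x*)_i) satisfies v = (I + Λ⁻¹GᵀΛ)⁻¹ c; moreover, if I + G is also invertible, then x* = (I+G)⁻¹ q^λ where q^λ := (I+G)x* is the vector determined by b_i'(q^λ_i) = ((I + Λ⁻¹GᵀΛ)⁻¹ c)_i for all i. -/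

import Mathlib

open Matrix Finset

theorem interior_pareto_eq_alpha_centrality (n : ℕ) (hn : 1 ≤ n)
    (G : Matrix (Fin n) (Fin n) ℝ) (hdiag : ∀ i, G i i = 0)
    (c l : Fin n → ℝ) (hc : ∀ i, 0 < c i) (hl : ∀ i, 0 < l i)
    (b : Fin n → ℝ → ℝ) (hb : ∀ k, Differentiable ℝ (b k))
    (u : (Fin n → ℝ) → Fin n → ℝ)
    (hu : ∀ x k, u x k = b k (x k + ∑ j ∈ Finset.univ.erase k, G k j * x j) - c k * x k)
    (hΛinv : IsUnit (1 + (Matrix.diagonal l)⁻¹ * Gᵀ * Matrix.diagonal l).det)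
    (x : Fin n → ℝ) (hpos : ∀ i, 0 < x i)
    (hmax : ∀ y : Fin n → ℝ, 0 ≤ y → ∑ k, l k * u y k ≤ ∑ k, l k * u x k) :
    (∀ i, deriv (b i) ((1 + G).mulVec x i) =
      ((1 + (Matrix.diagonal l)⁻¹ * Gᵀ * Matrix.diagonal l)⁻¹.mulVec c) i) ∧
    (IsUnit (1 + G).det → x = (1 + G)⁻¹.mulVec ((1 + G).mulVec x)) := by
  have q : Fin n → ℝ := (1 + G).mulVec x
  set M := 1 + (Matrix.diagonal l)⁻¹ * Gᵀ * Matrix.diagonal l with hMdef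
  set qv : Fin n → ℝ := (1 + G).mulVec x with hq
  set v : Fin n → ℝ := fun k => deriv (b k) (qv k) with hv
  -- mulVec formula
  have hmv : ∀ (y : Fin n → ℝ) (k : Fin n),
      ((1 + G).mulVec y) k = y k + ∑ j ∈ Finset.univ.erase k, G k j * y j := by
    intro y k
    have h1 : ((1 + G).mulVec y) k = ∑ j, ((if k = j then (1:ℝ) else 0) + G k j) * y j := by
      simp [Matrix.mulVec, dotProduct, Matrix.add_apply, Matrix.one_apply]
    rw [h1]
    have h2 : ∑ j ∈ Finset.univ.erase k, G k j * y j = ∑ j, G k j * y j :=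
      Finset.sum_erase _ (by simp [hdiag k])
    rw [h2]
    rw [Finset.sum_congr rfl (fun j _ => add_mul _ _ _), Finset.sum_add_distrib]
    simp [Finset.sum_ite_eq]
  -- the first-order conditions
  have foc : ∀ i, ∑ k, l k * (v k * ((1 : Matrix (Fin n) (Fin n) ℝ) + G) k i) = l i * c i := by
    intro i
    -- explicit local function along coordinate i
    set g : ℝ → ℝ := fun t =>
      ∑ k, l k * (b k (qv k + (1 + G) k i * (t - x i)) - c k * Function.update x i t k) with hg
    have hupdate : ∀ t : ℝ, Function.update x i t = x + (t - x i) • (Pi.single i 1 : Fin n → ℝ) := by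
      intro t
      funext j
      by_cases hj : j = i
      · subst hj; simp [Function.update_apply]
      · simp [Function.update_apply, hj, Pi.single_apply]
    have harg : ∀ (t : ℝ) (k : Fin n),
        qv k + (1 + G) k i * (t - x i) =
          Function.update x i t k + ∑ j ∈ Finset.univ.erase k, G k j * Function.update x i t j := by
      intro t k
      rw [← hmv, hupdate t, Matrix.mulVec_add, Matrix.mulVec_smul]
      simp [Pi.add_apply, Pi.smul_apply, hq, mul_comm]
    have hgW : ∀ t, g t = ∑ k, l k * u (Function.update x i t) k := by
      intro t
      refine Finset.sum_congr rfl fun k _ => ?_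
      rw [hu, ← harg]
    -- local max at x i
    have hlm : IsLocalMax g (x i) := by
      filter_upwards [eventually_gt_nhds (hpos i)] with t ht
      rw [hgW t, hgW (x i), Function.update_eq_self]
      refine hmax _ fun j => ?_
      by_cases hj : j = i
      · subst hj; simpa using ht.le
      · simpa [Function.update_apply, hj] using (hpos j).le
    -- derivative of g
    have hderiv : HasDerivAt g
        (∑ k, l k * (v k * (1 + G) k i - (if k = i then c k else 0))) (x i) := by
      apply HasDerivAt.fun_sum
      intro k _
      have h1 : HasDerivAt (fun t => qv k + (1 + G) k i * (t - x i)) ((1 + G) k i) (x i) := by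
        simpa using (((hasDerivAt_id (x i)).sub_const (x i)).const_mul ((1 + G) k i)).const_add
          (qv k)
      have h2 : HasDerivAt (fun t => b k (qv k + (1 + G) k i * (t - x i)))
          (v k * (1 + G) k i) (x i) := by
        have hb' : HasDerivAt (b k) (v k) (qv k + (1 + G) k i * (x i - x i)) := by
          rw [sub_self, mul_zero, add_zero]; exact ((hb k) (qv k)).hasDerivAt
        exact HasDerivAt.comp (x i) hb' h1
      have h3 : HasDerivAt (fun t => c k * Function.update x i t k)
          (if k = i then c k else 0) (x i) := by
        by_cases hk : k = i
        · subst hk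
          simpa [Function.update_self] using (hasDerivAt_id (x k)).const_mul (c k)
        · simpa [Function.update_apply, hk] using (hasDerivAt_const (x i) (c k * x k))
      exact (h2.sub h3).const_mul (l k)
    have hzero : ∑ k, l k * (v k * (1 + G) k i - (if k = i then c k else 0)) = 0 := by
      rw [← hderiv.deriv]; exact hlm.deriv_eq_zero
    have hsum : ∑ k, l k * (v k * (1 + G) k i) -
        ∑ k, l k * (if k = i then c k else 0) = 0 := by
      rw [← Finset.sum_sub_distrib]
      simpa [mul_sub] using hzero
    have hite : ∑ k, l k * (if k = i then c k else 0) = l i * c i := by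
      rw [Finset.sum_congr rfl fun k _ => by rw [mul_ite, mul_zero]]
      simp
    rw [hite] at hsum
    linarith
  -- diagonal matrix facts
  have hDdet : IsUnit (Matrix.diagonal l).det := by
    rw [Matrix.det_diagonal]
    exact (Finset.prod_pos fun i _ => hl i).ne'.isUnit
  have hMv : M.mulVec v = c := by
    have hDM : Matrix.diagonal l * M = Matrix.diagonal l + Gᵀ * Matrix.diagonal l := by
      rw [hMdef, mul_add, mul_one, ← mul_assoc, ← mul_assoc,
        Matrix.mul_nonsing_inv _ hDdet, one_mul]
    have hDMv : (Matrix.diagonal l).mulVec (M.mulVec v) = (Matrix.diagonal l).mulVec c := by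
      rw [Matrix.mulVec_mulVec, hDM]
      funext i
      have hlhs : ((Matrix.diagonal l + Gᵀ * Matrix.diagonal l).mulVec v) i =
          l i * v i + ∑ k, G k i * (l k * v k) := by
        rw [Matrix.add_mulVec, ← Matrix.mulVec_mulVec]
        simp only [Pi.add_apply, Matrix.mulVec_diagonal]
        congr 1
        simp [Matrix.mulVec, dotProduct, Matrix.transpose_apply, Matrix.diagonal_apply,
          ite_mul, zero_mul, Finset.sum_ite_eq]
      rw [hlhs, Matrix.mulVec_diagonal, ← foc i]
      have hrhs : ∀ k : Fin n, l k * (v k * ((1 : Matrix (Fin n) (Fin n) ℝ) + G) k i) =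
          (if k = i then l k * v k else 0) + G k i * (l k * v k) := by
        intro k
        by_cases hk : k = i <;> simp [hk, Matrix.add_apply, Matrix.one_apply, Ne.symm] <;> ring
      rw [Finset.sum_congr rfl fun k _ => hrhs k, Finset.sum_add_distrib]
      simp
    have := congrArg (fun w => (Matrix.diagonal l)⁻¹.mulVec w) hDMv
    simpa [Matrix.mulVec_mulVec, ← Matrix.mul_assoc, Matrix.nonsing_inv_mul _ hDdet] using this
  constructor
  · intro i
    have hvi : v = M⁻¹.mulVec c := by
      rw [← hMv, Matrix.mulVec_mulVec, Matrix.nonsing_inv_mul _ hΛinv, Matrix.one_mulVec]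
    exact congrFun hvi i
  · intro h
    rw [Matrix.mulVec_mulVec, Matrix.nonsing_inv_mul _ h, Matrix.one_mulVec]
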